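/- Let X^*, Y^* be filtered simplicial complexes on finite vertex sets, f : X^* → Y^* and g : Y^* → X^* morphisms, and R a correspondence between the vertex sets containing the graphs of both f and g. Then (f, g) is a dis(R)-interleaving; consequently d_I^F(X^*, Y^*) ≤ 2 d_GH(X^*, Y^*). -/
import Mathlib


open Finset Function

noncomputable section
open scoped Classical

variable {V W U : Type} [Fintype V] [Fintype W] [Fintype U]

/-- A size function is monotone on nonempty subsets. -/
def Monot (D : Finset V → ℝ) : Prop :=
  ∀ ⦃α β : Finset V⦄, α.Nonempty → α ⊆ β → D α ≤ D β

/-- `max 0 (sup over nonempty subsets of the vertex set of g)`. -/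
def supSub (g : Finset V → ℝ) : ℝ :=
  ((Finset.univ : Finset V).powerset.filter Finset.Nonempty).fold max 0 g

/-- Degree of a morphism: least `r ≥ 0` with `D_Y (f α) ≤ D_X α + r` for all nonempty `α`. -/
def degF (DX : Finset V → ℝ) (DY : Finset W → ℝ) (f : V → W) : ℝ :=
  supSub fun α => DY (α.image f) - DX α

/-- Codegree: least `r ≥ 0` with `D_Y (f α ∪ g α) ≤ D_X α + r` for all nonempty `α`. -/
def codegF (DX : Finset V → ℝ) (DY : Finset W → ℝ) (f g : V → W) : ℝ :=
  supSub fun α => DY (α.image f ∪ α.image g) - DX α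

/-- `codeg^∞`: minimum over chains `f = F 0, …, F n = g` of the max codegree of
consecutive terms. -/
def codegInfF (DX : Finset V → ℝ) (DY : Finset W → ℝ) (f g : V → W) : ℝ :=
  sInf { c : ℝ | ∃ n : ℕ, 0 < n ∧ ∃ F : ℕ → V → W, F 0 = f ∧ F n = g ∧
    c = (Finset.range n).fold max 0 fun i => codegF DX DY (F i) (F (i + 1)) }

/-- `(f, g)` is an `ε`-interleaving between the filtered complexes given by `DX`, `DY`. -/
def IsInterleaving (DX : Finset V → ℝ) (DY : Finset W → ℝ)
    (f : V → W) (g : W → V) (ε : ℝ) : Prop :=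
  degF DX DY f ≤ ε ∧ degF DY DX g ≤ ε ∧
  codegInfF DX DX (g ∘ f) id ≤ 2 * ε ∧ codegInfF DY DY (f ∘ g) id ≤ 2 * ε

/-- The interleaving distance between filtered simplicial complexes. -/
def dIF (DX : Finset V → ℝ) (DY : Finset W → ℝ) : ℝ :=
  sInf { ε : ℝ | 0 ≤ ε ∧ ∃ f g, IsInterleaving DX DY f g ε }

/-- The vertex quasi-distance `δ_X(v,w)`. -/
def vqd (D : Finset V → ℝ) (v w : V) : ℝ :=
  supSub fun α => D (insert w α) - D (insert v α)

/-- Distortion of a correspondence `R ⊆ V × W`, viewed as a tripod via the projections. -/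
def corDis (DX : Finset V → ℝ) (DY : Finset W → ℝ) (R : Finset (V × W)) : ℝ :=
  (R.powerset.filter Finset.Nonempty).fold max 0 fun α =>
    |DX (α.image Prod.fst) - DY (α.image Prod.snd)|

/-- Gromov–Hausdorff distance (via correspondences). -/
def dGHcor (DX : Finset V → ℝ) (DY : Finset W → ℝ) : ℝ :=
  (1 / 2) * sInf { c : ℝ | ∃ R : Finset (V × W),
    (∀ v : V, ∃ w, (v, w) ∈ R) ∧ (∀ w : W, ∃ v, (v, w) ∈ R) ∧ c = corDis DX DY R }

/-- Distortion of a tripod `(Z, p, q)`. -/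
def trdis (DX : Finset V → ℝ) (DY : Finset W → ℝ) {Z : Type} [Fintype Z]
    (p : Z → V) (q : Z → W) : ℝ :=
  supSub fun α : Finset Z => |DX (α.image p) - DY (α.image q)|

/-- Gromov–Hausdorff distance between filtered simplicial complexes (via tripods). -/
def dGHtri (DX : Finset V → ℝ) (DY : Finset W → ℝ) : ℝ :=
  (1 / 2) * sInf { c : ℝ | ∃ (Z : Type) (_i : Fintype Z) (p : Z → V) (q : Z → W),
    Surjective p ∧ Surjective q ∧ c = trdis DX DY p q }

/-- Diameter of a finite subset of a metric space. -/
def fdiam {M : Type} [MetricSpace M] (σ : Finset M) : ℝ :=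
  (σ ×ˢ σ).fold max 0 fun p => dist p.1 p.2

/-- Metric distortion of a correspondence between metric spaces. -/
def metDis {M N : Type} [MetricSpace M] [MetricSpace N] (R : Finset (M × N)) : ℝ :=
  (R ×ˢ R).fold max 0 fun p => |dist p.1.1 p.2.1 - dist p.1.2 p.2.2|

/-- Gromov–Hausdorff distance between finite metric spaces. -/
def dGHmet (M N : Type) [MetricSpace M] [MetricSpace N] : ℝ :=
  (1 / 2) * sInf { c : ℝ | ∃ R : Finset (M × N),
    (∀ x : M, ∃ y, (x, y) ∈ R) ∧ (∀ y : N, ∃ x, (x, y) ∈ R) ∧ c = metDis R }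

lemma le_supSub {D : Finset V → ℝ} {α : Finset V} (h : α.Nonempty) : D α ≤ supSub D := by
  refine (Finset.le_fold_max _).2 (Or.inr ⟨α, ?_, le_rfl⟩)
  simp [Finset.mem_filter, Finset.mem_powerset, h]

lemma supSub_le {D : Finset V → ℝ} {b : ℝ} (hb : 0 ≤ b)
    (h : ∀ α : Finset V, α.Nonempty → D α ≤ b) : supSub D ≤ b :=
  (Finset.fold_max_le _).2 ⟨hb, fun α hα => h α (Finset.mem_filter.1 hα).2⟩

lemma corDis_nonneg (DX : Finset V → ℝ) (DY : Finset W → ℝ) (R : Finset (V × W)) :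
    0 ≤ corDis DX DY R :=
  ((Finset.fold_max_le _).1 le_rfl).1

lemma abs_le_corDis (DX : Finset V → ℝ) (DY : Finset W → ℝ) {R β : Finset (V × W)}
    (hβR : β ⊆ R) (hβ : β.Nonempty) :
    |DX (β.image Prod.fst) - DY (β.image Prod.snd)| ≤ corDis DX DY R := by
  refine (Finset.le_fold_max _).2 (Or.inr ⟨β, ?_, le_rfl⟩)
  simp [Finset.mem_filter, Finset.mem_powerset, hβR, hβ]

lemma deg_le_corDis (DX : Finset V → ℝ) (DY : Finset W → ℝ)
    (f : V → W) {R : Finset (V × W)} (hf : ∀ v : V, (v, f v) ∈ R) :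
    degF DX DY f ≤ corDis DX DY R := by
  refine supSub_le (corDis_nonneg _ _ _) (fun α hα => ?_)
  have hsub : α.image (fun v => (v, f v)) ⊆ R :=
    Finset.image_subset_iff.2 fun v _ => hf v
  have h := abs_le_corDis DX DY hsub (hα.image _)
  rw [Finset.image_image, Finset.image_image] at h
  simp only [Function.comp_def] at h
  rw [show (Finset.image (fun x => x) α) = α from Finset.image_id] at h
  have := (abs_le.1 h).1
  linarith

lemma codeg_le (DX : Finset V → ℝ) (DY : Finset W → ℝ)
    (f : V → W) (g : W → V) {R : Finset (V × W)}
    (hf : ∀ v : V, (v, f v) ∈ R) (hg : ∀ w : W, (g w, w) ∈ R) :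
    codegF DX DX (g ∘ f) id ≤ 2 * corDis DX DY R := by
  have hε := corDis_nonneg DX DY R
  refine supSub_le (by linarith) (fun α hα => ?_)
  set β : Finset (V × W) := α.image (fun v => (v, f v)) ∪ α.image (fun v => (g (f v), f v))
    with hβdef
  have hsub : β ⊆ R := by
    refine Finset.union_subset (Finset.image_subset_iff.2 fun v _ => hf v)
      (Finset.image_subset_iff.2 fun v _ => hg (f v))
  have hβne : β.Nonempty := Finset.Nonempty.inl (hα.image _)
  have h1 := abs_le_corDis DX DY hsub hβne
  have hfst : β.image Prod.fst = α ∪ α.image (g ∘ f) := by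
    rw [hβdef, Finset.image_union, Finset.image_image, Finset.image_image]
    simp [Function.comp_def]
  have hsnd : β.image Prod.snd = α.image f := by
    rw [hβdef, Finset.image_union, Finset.image_image, Finset.image_image]
    simp [Function.comp_def]
  rw [hfst, hsnd] at h1
  have hsub2 : α.image (fun v => (v, f v)) ⊆ R := Finset.image_subset_iff.2 fun v _ => hf v
  have h2 := abs_le_corDis DX DY hsub2 (hα.image _)
  rw [Finset.image_image, Finset.image_image] at h2
  simp only [Function.comp_def] at h2
  rw [show (Finset.image (fun x => x) α) = α from Finset.image_id] at h2
  have hgoal : α.image (g ∘ f) ∪ α.image id = α ∪ α.image (g ∘ f) := by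
    rw [Finset.image_id, Finset.union_comm]
  rw [hgoal]
  have e1 := (abs_le.1 h1).2
  have e2 := (abs_le.1 h2).1
  linarith

lemma codegInf_le_codeg (DX DX' : Finset V → ℝ) (h1 h2 : V → V) :
    codegInfF DX DX' h1 h2 ≤ max (codegF DX DX' h1 h2) 0 := by
  apply csInf_le
  · refine ⟨0, fun c hc => ?_⟩
    obtain ⟨n, hn, F, hF0, hFn, rfl⟩ := hc
    exact ((Finset.fold_max_le _).1 le_rfl).1
  · refine ⟨1, one_pos, fun i => if i = 0 then h1 else h2, rfl, rfl, ?_⟩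
    simp [Finset.range_one, Finset.fold_singleton, max_comm]

lemma interleave_of_corr (DX : Finset V → ℝ) (DY : Finset W → ℝ)
    (f : V → W) (g : W → V) (R : Finset (V × W))
    (hf : ∀ v : V, (v, f v) ∈ R) (hg : ∀ w : W, (g w, w) ∈ R) :
    IsInterleaving DX DY f g (corDis DX DY R) := by
  have hε := corDis_nonneg DX DY R
  have hg' : ∀ w : W, (w, g w) ∈ R.image (Prod.swap) :=
    fun w => Finset.mem_image.2 ⟨(g w, w), hg w, rfl⟩
  have hf' : ∀ v : V, (f v, v) ∈ R.image (Prod.swap) :=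
    fun v => Finset.mem_image.2 ⟨(v, f v), hf v, rfl⟩
  have hswap : corDis DY DX (R.image Prod.swap) ≤ corDis DX DY R := by
    refine (Finset.fold_max_le _).2 ⟨hε, fun β hβ => ?_⟩
    obtain ⟨hβsub, hβne⟩ := Finset.mem_filter.1 hβ
    rw [Finset.mem_powerset] at hβsub
    set γ : Finset (V × W) := β.image Prod.swap with hγ
    have hγsub : γ ⊆ R := by
      intro p hp
      obtain ⟨q, hq, rfl⟩ := Finset.mem_image.1 hp
      obtain ⟨r, hr, rfl⟩ := Finset.mem_image.1 (hβsub hq)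
      simpa using hr
    have h := abs_le_corDis DX DY hγsub (hβne.image _)
    have h1 : γ.image Prod.fst = β.image Prod.snd := by
      rw [hγ, Finset.image_image]; rfl
    have h2 : γ.image Prod.snd = β.image Prod.fst := by
      rw [hγ, Finset.image_image]; rfl
    rw [h1, h2, abs_sub_comm] at h
    exact h
  refine ⟨deg_le_corDis DX DY f hf, le_trans (deg_le_corDis DY DX g hg') hswap, ?_, ?_⟩
  · refine le_trans (codegInf_le_codeg _ _ _ _) (max_le ?_ (by linarith))
    exact codeg_le DX DY f g hf hg
  · refine le_trans (codegInf_le_codeg _ _ _ _) (max_le ?_ (by linarith))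
    calc codegF DY DY (f ∘ g) id ≤ 2 * corDis DY DX (R.image Prod.swap) :=
          codeg_le DY DX g f hg' hf'
      _ ≤ 2 * corDis DX DY R := by linarith

/-- if a correspondence `R` contains the graphs of `f` and `g`, then
`(f, g)` is a `dis(R)`-interleaving; consequently `d_I^F ≤ 2 d_GH`. -/
theorem stmt_12 [Nonempty V] [Nonempty W]
    (DX : Finset V → ℝ) (DY : Finset W → ℝ) (hX : Monot DX) (hY : Monot DY)
    (f : V → W) (g : W → V) (R : Finset (V × W))
    (hRV : ∀ v : V, ∃ w, (v, w) ∈ R) (hRW : ∀ w : W, ∃ v, (v, w) ∈ R)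
    (hf : ∀ v : V, (v, f v) ∈ R) (hg : ∀ w : W, (g w, w) ∈ R) :
    IsInterleaving DX DY f g (corDis DX DY R) ∧ dIF DX DY ≤ 2 * dGHcor DX DY := by
  refine ⟨interleave_of_corr DX DY f g R hf hg, ?_⟩
  rw [dGHcor, dIF]
  rw [show (2 : ℝ) * ((1/2) * sInf _) = sInf { c : ℝ | ∃ R : Finset (V × W),
    (∀ v : V, ∃ w, (v, w) ∈ R) ∧ (∀ w : W, ∃ v, (v, w) ∈ R) ∧ c = corDis DX DY R } by ring]
  refine csInf_le_csInf ⟨0, fun ε hε => hε.1⟩ ?_ ?_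
  · exact ⟨corDis DX DY Finset.univ, Finset.univ,
      fun v => ⟨Classical.arbitrary W, Finset.mem_univ _⟩,
      fun w => ⟨Classical.arbitrary V, Finset.mem_univ _⟩, rfl⟩
  · rintro c ⟨R', hR'V, hR'W, rfl⟩
    refine ⟨corDis_nonneg _ _ _, fun v => (hR'V v).choose, fun w => (hR'W w).choose, ?_⟩
    exact interleave_of_corr DX DY _ _ R' (fun v => (hR'V v).choose_spec)
      (fun w => (hR'W w).choose_spec)
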